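/- Let K be a field, r ≥ 1 and d ≥ 1 integers, and let H ∈ K[[t₁,…,t_r]] be a formal power series such that (i) there exist polynomials P, Q ∈ K[t₁,…,t_r] with Q ≠ 0 and H·Q = P in K[[t₁,…,t_r]], and (ii) every monomial occurring in H has its t₁-exponent divisible by d. Then there exist polynomials P', Q' ∈ K[t₁,…,t_r], with Q' ≠ 0, such that every monomial occurring in P' and in Q' has its t₁-exponent divisible by d and H·Q' = P' in K[[t₁,…,t_r]]. -/

import Mathlib

/-- if a rational multivariate power series only involves monomials whose
`t₁`-exponent is divisible by `d`, then it admits a rational expression `H·Q' = P'` in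
which all monomials of `P'` and `Q'` have `t₁`-exponent divisible by `d`. -/
theorem rational_divisible_exponents {K : Type*} [Field K] {r : ℕ} (hr : 1 ≤ r)
    (d : ℕ) (hd : 1 ≤ d) (H : MvPowerSeries (Fin r) K)
    (P Q : MvPolynomial (Fin r) K) (hQ : Q ≠ 0)
    (hPQ : H * (Q : MvPowerSeries (Fin r) K) = (P : MvPowerSeries (Fin r) K))
    (hdvd : ∀ m : Fin r →₀ ℕ, ¬ d ∣ m ⟨0, hr⟩ → MvPowerSeries.coeff m H = 0) :
    ∃ P' Q' : MvPolynomial (Fin r) K, Q' ≠ 0 ∧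
      (∀ m ∈ P'.support, d ∣ m ⟨0, hr⟩) ∧
      (∀ m ∈ Q'.support, d ∣ m ⟨0, hr⟩) ∧
      H * (Q' : MvPowerSeries (Fin r) K) = (P' : MvPowerSeries (Fin r) K) := by
  classical
  set i0 : Fin r := ⟨0, hr⟩ with hi0
  -- pick a monomial of Q and its residue class j
  obtain ⟨m0, hm0⟩ : ∃ m0, MvPolynomial.coeff m0 Q ≠ 0 := by
    by_contra h
    push_neg at h
    exact hQ (MvPolynomial.ext _ _ fun m => by simp [h m])
  obtain ⟨j, hjm0, hjj⟩ : ∃ j : ℕ, m0 i0 % d = j ∧ j % d = j :=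
    ⟨m0 i0 % d, rfl, Nat.mod_mod_of_dvd _ dvd_rfl⟩
  -- the j-components of Q and P
  set Qj : MvPolynomial (Fin r) K := AddMonoidAlgebra.ofCoeff (Finsupp.filter (fun m => m i0 % d = j) (AddMonoidAlgebra.coeff Q)) with hQjdef
  set Pj : MvPolynomial (Fin r) K := AddMonoidAlgebra.ofCoeff (Finsupp.filter (fun m => m i0 % d = j) (AddMonoidAlgebra.coeff P)) with hPjdef
  have coeffQj : ∀ m, MvPolynomial.coeff m Qj
      = if m i0 % d = j then MvPolynomial.coeff m Q else 0 := by
    intro m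
    show Finsupp.filter _ (AddMonoidAlgebra.coeff Q) m = _
    rw [Finsupp.filter_apply]; rfl
  have coeffPj : ∀ m, MvPolynomial.coeff m Pj
      = if m i0 % d = j then MvPolynomial.coeff m P else 0 := by
    intro m
    show Finsupp.filter _ (AddMonoidAlgebra.coeff P) m = _
    rw [Finsupp.filter_apply]; rfl
  have hQjne : Qj ≠ 0 := by
    intro h
    apply hm0
    have := coeffQj m0
    rw [h, if_pos hjm0] at this
    simpa using this.symm
  -- key: H * Qj = Pj
  have key : H * (Qj : MvPowerSeries (Fin r) K) = (Pj : MvPowerSeries (Fin r) K) := by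
    ext m
    rw [MvPolynomial.coeff_coe, coeffPj, MvPowerSeries.coeff_mul]
    by_cases hm : m i0 % d = j
    · rw [if_pos hm, ← MvPolynomial.coeff_coe, ← hPQ, MvPowerSeries.coeff_mul]
      apply Finset.sum_congr rfl
      intro p hp
      rw [Finset.HasAntidiagonal.mem_antidiagonal] at hp
      by_cases hH : MvPowerSeries.coeff p.1 H = 0
      · rw [hH, zero_mul, zero_mul]
      · have hdp : d ∣ p.1 i0 := by
          by_contra hc
          exact hH (hdvd p.1 hc)
        obtain ⟨k, hk⟩ := hdp
        have hmod : p.2 i0 % d = j := by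
          have : m i0 = p.1 i0 + p.2 i0 := by rw [← hp]; simp
          rw [this, hk, Nat.mul_add_mod] at hm
          exact hm
        rw [MvPolynomial.coeff_coe, MvPolynomial.coeff_coe, coeffQj, if_pos hmod]
    · rw [if_neg hm]
      apply Finset.sum_eq_zero
      intro p hp
      rw [Finset.HasAntidiagonal.mem_antidiagonal] at hp
      by_cases hH : MvPowerSeries.coeff p.1 H = 0
      · rw [hH, zero_mul]
      · have hdp : d ∣ p.1 i0 := by
          by_contra hc
          exact hH (hdvd p.1 hc)
        obtain ⟨k, hk⟩ := hdp
        have hmod : p.2 i0 % d ≠ j := by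
          have hsum : m i0 = p.1 i0 + p.2 i0 := by rw [← hp]; simp
          intro h
          apply hm
          rw [hsum, hk, Nat.mul_add_mod, h]
        rw [MvPolynomial.coeff_coe, coeffQj, if_neg hmod, mul_zero]
  -- support residues multiply additively
  have mul_res : ∀ (A B : MvPolynomial (Fin r) K) (a b : ℕ),
      (∀ m ∈ A.support, m i0 % d = a % d) → (∀ m ∈ B.support, m i0 % d = b % d) →
      ∀ m ∈ (A * B).support, m i0 % d = (a + b) % d := by
    intro A B a b hA hB m hm
    have := MvPolynomial.support_mul A B hm
    rw [Finset.mem_add] at this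
    obtain ⟨x, hx, y, hy, hxy⟩ := this
    subst hxy
    have h1 := hA x hx
    have h2 := hB y hy
    show (x + y) i0 % d = _
    rw [Finsupp.add_apply, Nat.add_mod, h1, h2, ← Nat.add_mod]
  have hQjsupp : ∀ m ∈ Qj.support, m i0 % d = j % d := by
    intro m hm
    rw [hjj]
    have h := coeffQj m
    by_contra hc
    rw [if_neg hc] at h
    exact (MvPolynomial.mem_support_iff.mp hm) h
  have hPjsupp : ∀ m ∈ Pj.support, m i0 % d = j % d := by
    intro m hm
    rw [hjj]
    have h := coeffPj m
    by_contra hc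
    rw [if_neg hc] at h
    exact (MvPolynomial.mem_support_iff.mp hm) h
  -- powers of Qj
  have pow_res : ∀ n : ℕ, ∀ m ∈ (Qj ^ n).support, m i0 % d = (n * j) % d := by
    intro n
    induction n with
    | zero =>
      intro m hm
      rw [pow_zero] at hm
      have h := MvPolynomial.mem_support_iff.mp hm
      rw [MvPolynomial.coeff_one] at h
      by_cases h0 : (0 : Fin r →₀ ℕ) = m
      · subst h0; simp
      · rw [if_neg h0] at h; exact absurd rfl h
    | succ n ih =>
      intro m hm
      rw [pow_succ] at hm
      have := mul_res (Qj ^ n) Qj (n * j) j ih hQjsupp m hm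
      rw [this, Nat.succ_mul]
  refine ⟨Pj * Qj ^ (d - 1), Qj ^ d, pow_ne_zero _ hQjne, ?_, ?_, ?_⟩
  · -- support of P' = Pj * Qj^(d-1)
    intro m hm
    have h := mul_res Pj (Qj ^ (d - 1)) j ((d - 1) * j) hPjsupp (pow_res (d - 1)) m hm
    apply Nat.dvd_of_mod_eq_zero
    rw [h]
    have heq : j + (d - 1) * j = d * j := by
      have h1 : d - 1 + 1 = d := Nat.succ_pred_eq_of_pos hd
      calc j + (d - 1) * j = ((d - 1) + 1) * j := by ring
        _ = d * j := by rw [h1]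
    rw [heq, Nat.mul_mod_right]
  · -- support of Q' = Qj^d
    intro m hm
    apply Nat.dvd_of_mod_eq_zero
    rw [pow_res d m hm, Nat.mul_comm, Nat.mul_mod_left]
  · -- H * Qj^d = Pj * Qj^(d-1)
    push_cast
    calc H * (Qj : MvPowerSeries (Fin r) K) ^ d
        = (H * (Qj : MvPowerSeries (Fin r) K)) * (Qj : MvPowerSeries (Fin r) K) ^ (d - 1) := by
          conv_lhs => rw [show d = (d - 1) + 1 from (Nat.succ_pred_eq_of_pos hd).symm]
          ring
      _ = (Pj : MvPowerSeries (Fin r) K) * (Qj : MvPowerSeries (Fin r) K) ^ (d - 1) := by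
          rw [key]
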